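/- For every positive integer k, the central binomial coefficient satisfies C(2k, k) ≤ 4^k / √(π·k). -/
import Mathlib

open Real Stirling Filter Topology

lemma sqrt_pi_le_stirlingSeq (n : ℕ) (hn : 0 < n) :
    Real.sqrt Real.pi ≤ stirlingSeq n := by
  obtain ⟨m, rfl⟩ := Nat.exists_eq_succ_of_ne_zero hn.ne'
  have ht : Tendsto (stirlingSeq ∘ Nat.succ) atTop (𝓝 (Real.sqrt Real.pi)) :=
    tendsto_stirlingSeq_sqrt_pi.comp (tendsto_add_atTop_nat 1)
  exact stirlingSeq'_antitone.le_of_tendsto ht m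

lemma factorial_eq_stirling (n : ℕ) (hn : 0 < n) :
    (n.factorial : ℝ) = stirlingSeq n * (Real.sqrt (2 * n) * (n / Real.exp 1) ^ n) := by
  have h : (0:ℝ) < n := by exact_mod_cast hn
  have hpos : (0:ℝ) < Real.sqrt (2 * n) * (n / Real.exp 1) ^ n := by positivity
  rw [stirlingSeq, div_mul_cancel₀ _ hpos.ne']

/-- Central binomial coefficient bound: C(2k,k) ≤ 4^k / √(πk). -/
theorem stmt11 (k : ℕ) (hk : 0 < k) :
    ((2 * k).choose k : ℝ) ≤ 4 ^ k / Real.sqrt (Real.pi * k) := by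
  have hk' : (0:ℝ) < k := by exact_mod_cast hk
  have hsp : (0:ℝ) < Real.sqrt Real.pi := Real.sqrt_pos.mpr Real.pi_pos
  set a := stirlingSeq (2 * k) with ha
  set b := stirlingSeq k with hb
  have hbsp : Real.sqrt Real.pi ≤ b := sqrt_pi_le_stirlingSeq k hk
  have hbpos : 0 < b := lt_of_lt_of_le hsp hbsp
  have hapos : 0 < a := by
    rw [ha]
    obtain ⟨m, rfl⟩ := Nat.exists_eq_succ_of_ne_zero hk.ne'
    have h2 : 2 * (m + 1) = (2 * m + 1) + 1 := by ring
    rw [h2]; exact stirlingSeq'_pos (2 * m + 1)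
  have hab : a ≤ b := by
    rw [ha, hb]
    obtain ⟨m, rfl⟩ := Nat.exists_eq_succ_of_ne_zero hk.ne'
    have h2 : 2 * (m + 1) = (2 * m + 1) + 1 := by ring
    rw [h2]
    exact stirlingSeq'_antitone (by omega : m ≤ 2 * m + 1)
  set c := Real.sqrt k with hc
  set p := ((k : ℝ) / Real.exp 1) ^ k with hp
  have hcpos : 0 < c := Real.sqrt_pos.mpr hk'
  have hppos : 0 < p := by positivity
  have hc2 : c ^ 2 = k := Real.sq_sqrt hk'.le
  -- factorial identities
  have hkf : (k.factorial : ℝ) = b * (Real.sqrt 2 * c * p) := by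
    rw [factorial_eq_stirling k hk, ← hb, ← hp, hc, Real.sqrt_mul (by norm_num : (0:ℝ) ≤ 2)]
  have h2kf : ((2 * k).factorial : ℝ) = a * (2 * c) * (4 ^ k * p ^ 2) := by
    rw [factorial_eq_stirling (2 * k) (by omega)]
    have e1 : Real.sqrt (2 * ((2 * k : ℕ) : ℝ)) = 2 * c := by
      push_cast
      rw [show (2 : ℝ) * (2 * k) = 2 ^ 2 * k by ring,
        Real.sqrt_mul (by positivity), Real.sqrt_sq (by norm_num : (0:ℝ) ≤ 2), hc]
    have e2 : (((2 * k : ℕ) : ℝ) / Real.exp 1) ^ (2 * k) = 4 ^ k * p ^ 2 := by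
      push_cast
      rw [show (2 : ℝ) * k / Real.exp 1 = 2 * ((k : ℝ) / Real.exp 1) by ring,
        mul_pow, hp, ← pow_mul, pow_mul 2 2 k]
      norm_num
      ring
    rw [e1, e2, ← ha]; ring
  have hfact : ((2 * k).choose k : ℝ) * ((k.factorial : ℝ) * k.factorial)
      = (2 * k).factorial := by
    have h := Nat.choose_mul_factorial_mul_factorial
      (Nat.le_mul_of_pos_left k (by norm_num : 0 < 2))
    have h2 : 2 * k - k = k := by omega
    rw [h2] at h
    have h' : (((2 * k).choose k * k.factorial * k.factorial : ℕ) : ℝ)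
        = ((2 * k).factorial : ℝ) := by exact_mod_cast h
    push_cast at h'
    linear_combination h'
  have E : ((2 * k).choose k : ℝ) * (b ^ 2 * (2 * k) * p ^ 2)
      = a * 2 * c * 4 ^ k * p ^ 2 := by
    have hs2 : Real.sqrt 2 ^ 2 = 2 := Real.sq_sqrt (by norm_num)
    have h := hfact
    rw [hkf, h2kf] at h
    linear_combination h - ((2 * k).choose k : ℝ) * b ^ 2 * p ^ 2 * c ^ 2 * hs2
      - 2 * ((2 * k).choose k : ℝ) * b ^ 2 * p ^ 2 * hc2
  have hfin : ((2 * k).choose k : ℝ) * (Real.sqrt Real.pi * c) ≤ 4 ^ k := by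
    have hDpos : (0:ℝ) < b ^ 2 * (2 * k) * p ^ 2 := by positivity
    apply le_of_mul_le_mul_right _ hDpos
    have key : (a * Real.sqrt Real.pi) * (4 ^ k * (2 * k) * p ^ 2)
        ≤ (b * b) * (4 ^ k * (2 * k) * p ^ 2) :=
      mul_le_mul_of_nonneg_right (mul_le_mul hab hbsp hsp.le hbpos.le) (by positivity)
    calc ((2 * k).choose k : ℝ) * (Real.sqrt Real.pi * c) * (b ^ 2 * (2 * k) * p ^ 2)
        = (a * Real.sqrt Real.pi) * (4 ^ k * (2 * k) * p ^ 2) := by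
          linear_combination Real.sqrt Real.pi * c * E
            + 2 * a * Real.sqrt Real.pi * (4:ℝ) ^ k * p ^ 2 * hc2
      _ ≤ (b * b) * (4 ^ k * (2 * k) * p ^ 2) := key
      _ = 4 ^ k * (b ^ 2 * (2 * k) * p ^ 2) := by ring
  rw [Real.sqrt_mul Real.pi_pos.le, ← hc, le_div_iff₀ (by positivity)]
  exact hfin
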